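/- Let X and Y be Banach spaces, Γ a nonempty set, E an invariant sequence space over X, E_λ a strongly invariant sequence space over Y for each λ ∈ Γ, and f : X → Y a function with f(0) = 0. If x ∈ G(E, f, (E_λ)_{λ∈Γ}), then its zero-free version x⁰ also belongs to G(E, f, (E_λ)_{λ∈Γ}). -/

import Mathlib

/-- The zero-free version `x⁰` of a sequence: if `x` has infinitely many nonzero
coordinates, it enumerates them in increasing order of index; otherwise it is `0`. -/
noncomputable def zeroFree {X : Type*} [Zero X] (x : ℕ → X) : ℕ → X :=
  haveI := Classical.dec ({j | x j ≠ 0}.Infinite)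
  if {j | x j ≠ 0}.Infinite then (fun k => x (Nat.nth (fun j => x j ≠ 0) k)) else 0

/-- An invariant sequence space over a Banach space `X`: an infinite-dimensional Banach
space of `X`-valued sequences satisfying (b1) and (b2) of Definition 2.1 of [BDFP]. -/
structure InvSeqSpace (𝕂 : Type*) [RCLike 𝕂] (X : Type*)
    [NormedAddCommGroup X] [NormedSpace 𝕂 X] where
  carrier : Submodule 𝕂 (ℕ → X)
  nrm : (ℕ → X) → ℝ
  K : ℝ
  infinite_dim : ¬ Module.Finite 𝕂 carrier
  nrm_nonneg : ∀ x ∈ carrier, 0 ≤ nrm x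
  nrm_eq_zero_iff : ∀ x ∈ carrier, (nrm x = 0 ↔ x = 0)
  nrm_add_le : ∀ x ∈ carrier, ∀ y ∈ carrier, nrm (x + y) ≤ nrm x + nrm y
  nrm_smul : ∀ (a : 𝕂), ∀ x ∈ carrier, nrm (a • x) = ‖a‖ * nrm x
  complete : ∀ u : ℕ → (ℕ → X), (∀ n, u n ∈ carrier) →
    (∀ ε : ℝ, 0 < ε → ∃ N, ∀ m ≥ N, ∀ n ≥ N, nrm (u m - u n) < ε) →
    ∃ v ∈ carrier, ∀ ε : ℝ, 0 < ε → ∃ N, ∀ n ≥ N, nrm (u n - v) < ε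
  zeroFree_mem_iff : ∀ x : ℕ → X, zeroFree x ≠ 0 → (x ∈ carrier ↔ zeroFree x ∈ carrier)
  nrm_le_K_mul : ∀ x : ℕ → X, zeroFree x ≠ 0 → x ∈ carrier → nrm x ≤ K * nrm (zeroFree x)
  coord_le_nrm : ∀ x ∈ carrier, ∀ j, ‖x j‖ ≤ nrm x

/-- A strongly invariant sequence space: an invariant sequence space containing `c₀₀(X)`
and such that a sequence belongs to it iff all its subsequences do. -/
structure StrongInvSeqSpace (𝕂 : Type*) [RCLike 𝕂] (X : Type*)
    [NormedAddCommGroup X] [NormedSpace 𝕂 X] extends InvSeqSpace 𝕂 X where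
  c00_subset : ∀ x : ℕ → X, (∃ N, ∀ j, N ≤ j → x j = 0) → x ∈ carrier
  mem_iff_subseq : ∀ x : ℕ → X,
    x ∈ carrier ↔ ∀ g : ℕ → ℕ, StrictMono g → (fun k => x (g k)) ∈ carrier

/-- `f` is compatible with a sequence space `E` (Definition 2.3 of [NP]). -/
def Compatible (𝕂 : Type*) [RCLike 𝕂] {X Y : Type*}
    [NormedAddCommGroup X] [NormedSpace 𝕂 X] [NormedAddCommGroup Y] [NormedSpace 𝕂 Y]
    (f : X → Y) (E : Set (ℕ → Y)) : Prop :=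
  f 0 = 0 ∧ ∀ (x : ℕ → X) (a : 𝕂), a ≠ 0 →
    (fun j => f (x j)) ∉ E → (fun j => f (a • x j)) ∉ E

/-- The set `G(E, f, (E_λ)_{λ∈Γ})`. -/
def Gset {𝕂 : Type*} [RCLike 𝕂] {X Y Γ : Type*}
    [NormedAddCommGroup X] [NormedSpace 𝕂 X] [NormedAddCommGroup Y] [NormedSpace 𝕂 Y]
    (E : InvSeqSpace 𝕂 X) (f : X → Y) (F : Γ → StrongInvSeqSpace 𝕂 Y) : Set (ℕ → X) :=
  {x | x ∈ E.carrier ∧ (fun j => f (x j)) ∉ ⋃ lam, ((F lam).carrier : Set (ℕ → Y))}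

/-- `W` is closed in the sequence space `E` (w.r.t. the metric induced by `E.nrm`). -/
def ClosedIn {𝕂 : Type*} [RCLike 𝕂] {X : Type*}
    [NormedAddCommGroup X] [NormedSpace 𝕂 X]
    (E : InvSeqSpace 𝕂 X) (W : Set (ℕ → X)) : Prop :=
  ∀ x ∈ E.carrier, (∀ ε : ℝ, 0 < ε → ∃ y ∈ W, E.nrm (x - y) < ε) → x ∈ W

/-- If `x ∈ G(E, f, (E_λ)_{λ∈Γ})` (with `Γ` nonempty and `f(0) = 0`), then its zero-free
version `x⁰` also belongs to `G(E, f, (E_λ)_{λ∈Γ})`. -/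
theorem zeroFree_mem_Gset
    {𝕂 X Y Γ : Type*} [RCLike 𝕂] [Nonempty Γ]
    [NormedAddCommGroup X] [NormedSpace 𝕂 X] [CompleteSpace X]
    [NormedAddCommGroup Y] [NormedSpace 𝕂 Y] [CompleteSpace Y]
    (E : InvSeqSpace 𝕂 X) (F : Γ → StrongInvSeqSpace 𝕂 Y)
    (f : X → Y) (hf : f 0 = 0)
    (x : ℕ → X) (hx : x ∈ Gset E f F) :
    zeroFree x ∈ Gset E f F := by
  classical
  obtain ⟨hxE, hxU⟩ := hx
  set y : ℕ → Y := fun j => f (x j) with hy_def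
  have hy : ∀ lam, y ∉ (F lam).carrier := fun lam h =>
    hxU (Set.mem_iUnion.2 ⟨lam, h⟩)
  -- the support of x is infinite
  have hS : {j | x j ≠ 0}.Infinite := by
    by_contra hfin
    obtain ⟨lam⟩ := (inferInstance : Nonempty Γ)
    apply hy lam
    apply (F lam).c00_subset
    obtain ⟨N, hN⟩ := (Set.not_infinite.1 hfin).bddAbove
    refine ⟨N + 1, fun j hj => ?_⟩
    have hxj : x j = 0 := by
      by_contra h
      have := hN (show j ∈ {j | x j ≠ 0} from h)
      omega
    simp [hy_def, hxj, hf]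
  have hzf : zeroFree x = fun k => x (Nat.nth (fun j => x j ≠ 0) k) := by
    unfold zeroFree
    simp only [if_pos hS]
  have hne : zeroFree x ≠ 0 := by
    rw [hzf]
    intro h
    exact (Nat.nth_mem_of_infinite (p := fun j => x j ≠ 0) hS 0) (congrFun h 0)
  refine ⟨(E.zeroFree_mem_iff x hne).1 hxE, ?_⟩
  intro hmem
  rw [Set.mem_iUnion] at hmem
  obtain ⟨lam, hz⟩ := hmem
  rw [hzf] at hz
  set z : ℕ → Y := fun k => f (x (Nat.nth (fun j => x j ≠ 0) k)) with hz_def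
  apply hy lam
  by_cases hT : {j | y j ≠ 0}.Infinite
  · -- zeroFree y is a subsequence of z
    have hzfy : zeroFree y = fun k => y (Nat.nth (fun j => y j ≠ 0) k) := by
      unfold zeroFree
      simp only [if_pos hT]
    set g : ℕ → ℕ := fun k =>
      Nat.count (fun j => x j ≠ 0) (Nat.nth (fun j => y j ≠ 0) k) with hg_def
    have hmemT : ∀ k, y (Nat.nth (fun j => y j ≠ 0) k) ≠ 0 := fun k =>
      Nat.nth_mem_of_infinite (p := fun j => y j ≠ 0) hT k
    have hmemS : ∀ k, x (Nat.nth (fun j => y j ≠ 0) k) ≠ 0 := by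
      intro k h
      exact hmemT k (by show f (x (Nat.nth (fun j => y j ≠ 0) k)) = 0; rw [h, hf])
    have hg : StrictMono g := by
      intro a b hab
      exact Nat.count_strict_mono (hmemS a)
        (Nat.nth_strictMono hT hab)
    have hcomp : zeroFree y = fun k => z (g k) := by
      rw [hzfy]
      funext k
      simp only [hz_def, hg_def]
      rw [Nat.nth_count (hmemS k)]
    have hne' : zeroFree y ≠ 0 := by
      rw [hzfy]
      intro h
      exact hmemT 0 (congrFun h 0)
    have : zeroFree y ∈ (F lam).carrier := by
      rw [hcomp]
      exact ((F lam).mem_iff_subseq z).1 hz g hg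
    exact ((F lam).zeroFree_mem_iff y hne').2 this
  · apply (F lam).c00_subset
    obtain ⟨N, hN⟩ := (Set.not_infinite.1 hT).bddAbove
    refine ⟨N + 1, fun j hj => ?_⟩
    by_contra h
    have := hN (show j ∈ {j | y j ≠ 0} from h)
    omega
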